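/- For every a ∈ ℤ_q, Ψ_q(a) ∈ ℤ_q and Ψ_q(a) ≡ a (mod p ℤ_q). -/

import Mathlib

open PowerSeries

/-- `Ψ ∈ T + T²ℤ[[T]]` satisfies `∑_{j≥0} p^{-j} Ψ(p^j T)^{q^j} = T` (coefficientwise). -/
def IsPsi (p q : ℕ) (Ψ : PowerSeries ℤ) : Prop :=
  PowerSeries.constantCoeff Ψ = 0 ∧ PowerSeries.coeff 1 Ψ = 1 ∧
  ∀ n : ℕ,
    (∑ j ∈ Finset.range (n + 1),
      ((p : ℚ) ^ j)⁻¹ *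
        PowerSeries.coeff n
          ((PowerSeries.rescale ((p : ℚ) ^ j) (Ψ.map (Int.castRingHom ℚ))) ^ (q ^ j)))
      = PowerSeries.coeff n (PowerSeries.X : PowerSeries ℚ)

/-- Evaluation of the entire function defined by an integral power series at a point of a
complete nonarchimedean field. -/
noncomputable def psiEval (Ψ : PowerSeries ℤ) {K : Type} [NormedField K] (x : K) : K :=
  ∑' i : ℕ, ((PowerSeries.coeff i Ψ : ℤ) : K) * x ^ i

/-- for every `a ∈ ℤ_q`, `Ψ_q(a) ∈ ℤ_q` and `Ψ_q(a) ≡ a (mod p ℤ_q)`.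
Here `ℚ_q` is modelled as a complete nonarchimedean normed field `K` with `‖p‖ = p⁻¹`,
value group `p^ℤ` (unramified) and residue field contained in `𝔽_q`
(`‖x^q - x‖ ≤ p⁻¹` on the unit ball `ℤ_q = {x : ‖x‖ ≤ 1}`); `mod p ℤ_q` congruence means
the difference has norm `≤ p⁻¹`. -/

theorem psi_coeff_dvd (p q : ℕ) (hp : p.Prime) (Ψ : PowerSeries ℤ)
    (hΨ : ∀ n : ℕ,
    (∑ j ∈ Finset.range (n + 1),
      ((p : ℚ) ^ j)⁻¹ *
        PowerSeries.coeff n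
          ((PowerSeries.rescale ((p : ℚ) ^ j) (Ψ.map (Int.castRingHom ℚ))) ^ (q ^ j)))
      = PowerSeries.coeff n (PowerSeries.X : PowerSeries ℚ))
    (n : ℕ) (hn : 2 ≤ n) : (p : ℤ) ^ (n - 1) ∣ PowerSeries.coeff n Ψ := by
  have hp0 : (p : ℚ) ≠ 0 := Nat.cast_ne_zero.mpr hp.pos.ne'
  set A : ℕ → ℤ := fun j => PowerSeries.coeff n (Ψ ^ (q ^ j)) with hA
  have h := hΨ n
  have hterm : ∀ j ∈ Finset.range (n + 1),
      ((p : ℚ) ^ j)⁻¹ *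
        PowerSeries.coeff n
          ((PowerSeries.rescale ((p : ℚ) ^ j) (Ψ.map (Int.castRingHom ℚ))) ^ (q ^ j))
      = (((p : ℤ) ^ (j * (n - 1)) * A j : ℤ) : ℚ) := by
    intro j _
    rw [← map_pow (PowerSeries.rescale ((p : ℚ) ^ j)), PowerSeries.coeff_rescale,
      ← map_pow (PowerSeries.map (Int.castRingHom ℚ)), PowerSeries.coeff_map, eq_intCast]
    have hx : ((p : ℚ) ^ j) ≠ 0 := pow_ne_zero _ hp0
    have hxn : ((p : ℚ) ^ j) ^ n = ((p : ℚ) ^ j) * ((p : ℚ) ^ j) ^ (n - 1) := by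
      conv_lhs => rw [show n = 1 + (n - 1) by omega]
      rw [pow_add, pow_one]
    rw [hxn]
    push_cast
    rw [← pow_mul]
    field_simp
    ring
  rw [Finset.sum_congr rfl hterm] at h
  have hX : PowerSeries.coeff n (PowerSeries.X : PowerSeries ℚ) = 0 := by
    rw [PowerSeries.coeff_X, if_neg (by omega)]
  rw [hX] at h
  have hsum : (∑ j ∈ Finset.range (n + 1), (p : ℤ) ^ (j * (n - 1)) * A j) = 0 := by
    exact_mod_cast h
  have hsplit : (∑ j ∈ Finset.range (n + 1), (p : ℤ) ^ (j * (n - 1)) * A j)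
      = A 0 + ∑ j ∈ Finset.Ico 1 (n + 1), (p : ℤ) ^ (j * (n - 1)) * A j := by
    rw [Finset.range_eq_Ico, Finset.sum_eq_sum_Ico_succ_bot (by omega)]
    simp
  have hA0 : A 0 = PowerSeries.coeff n Ψ := by simp [hA]
  rw [hsplit, hA0] at hsum
  have : PowerSeries.coeff n Ψ
      = -∑ j ∈ Finset.Ico 1 (n + 1), (p : ℤ) ^ (j * (n - 1)) * A j := by linarith
  rw [this]
  refine dvd_neg.mpr (Finset.dvd_sum fun j hj => ?_)
  have hj1 : 1 ≤ j := (Finset.mem_Ico.mp hj).1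
  exact dvd_mul_of_dvd_left (pow_dvd_pow _ (by nlinarith)) _

theorem psi_int_point_aux (p f : ℕ) (hp : p.Prime) (hf : 0 < f) (q : ℕ) (hq : q = p ^ f)
    (Ψ : PowerSeries ℤ) (hΨ : (PowerSeries.constantCoeff Ψ = 0 ∧ PowerSeries.coeff 1 Ψ = 1 ∧ ∀ n : ℕ, (∑ j ∈ Finset.range (n + 1), ((p : ℚ) ^ j)⁻¹ * PowerSeries.coeff n ((PowerSeries.rescale ((p : ℚ) ^ j) (Ψ.map (Int.castRingHom ℚ))) ^ (q ^ j))) = PowerSeries.coeff n (PowerSeries.X : PowerSeries ℚ)))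
    (K : Type) [NormedField K] [CompleteSpace K] (hna : IsUltrametricDist K)
    (hpK : ‖(p : K)‖ = (p : ℝ)⁻¹)
    (hdisc : ∀ x : K, x ≠ 0 → ∃ m : ℤ, ‖x‖ = (p : ℝ) ^ m)
    (hres : ∀ x : K, ‖x‖ ≤ 1 → ‖x ^ q - x‖ ≤ (p : ℝ)⁻¹)
    (a : K) (ha : ‖a‖ ≤ 1) :
    Summable (fun i : ℕ => ((PowerSeries.coeff i Ψ : ℤ) : K) * a ^ i) ∧
    ‖(∑' i : ℕ, ((PowerSeries.coeff i Ψ : ℤ) : K) * a ^ i)‖ ≤ 1 ∧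
    ‖(∑' i : ℕ, ((PowerSeries.coeff i Ψ : ℤ) : K) * a ^ i) - a‖ ≤ (p : ℝ)⁻¹ := by
  haveI := hna
  obtain ⟨hc0, hc1, heq⟩ := hΨ
  have hp1 : (1 : ℝ) < p := by exact_mod_cast hp.one_lt
  have hpinv0 : (0:ℝ) ≤ (p : ℝ)⁻¹ := by positivity
  have hpinv1 : (p : ℝ)⁻¹ < 1 := by
    rw [inv_lt_one_iff₀]; right; exact hp1
  set g : ℕ → K := fun i => ((PowerSeries.coeff i Ψ : ℤ) : K) * a ^ i with hg
  have hgnorm : ∀ n : ℕ, ‖g n‖ ≤ 1 := by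
    intro n
    rw [hg, norm_mul, norm_pow]
    exact mul_le_one₀ (IsUltrametricDist.norm_intCast_le_one K _)
      (pow_nonneg (norm_nonneg a) n) (pow_le_one₀ (norm_nonneg a) ha)
  have hbound : ∀ n : ℕ, 2 ≤ n → ‖g n‖ ≤ ((p : ℝ)⁻¹) ^ (n - 1) := by
    intro n hn
    obtain ⟨b, hb⟩ := psi_coeff_dvd p q hp Ψ heq n hn
    have : ((PowerSeries.coeff n Ψ : ℤ) : K) = (p : K) ^ (n - 1) * (b : K) := by
      rw [hb]; push_cast; ring
    rw [hg, norm_mul, this, norm_mul, norm_pow, hpK, norm_pow]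
    have h1 : ‖(b : K)‖ ≤ 1 := IsUltrametricDist.norm_intCast_le_one K _
    have h2 : ‖a‖ ^ n ≤ 1 := pow_le_one₀ (norm_nonneg a) ha
    calc ((p:ℝ)⁻¹) ^ (n-1) * ‖(b : K)‖ * ‖a‖ ^ n ≤ ((p:ℝ)⁻¹) ^ (n-1) * 1 * 1 := by
          gcongr
      _ = ((p:ℝ)⁻¹) ^ (n-1) := by ring
  have htend : Filter.Tendsto g Filter.cofinite (nhds 0) := by
    rw [Nat.cofinite_eq_atTop]
    apply squeeze_zero_norm' (a := fun n => ((p:ℝ)⁻¹) ^ (n - 1))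
    · filter_upwards [Filter.eventually_ge_atTop 2] with n hn using hbound n hn
    · exact (tendsto_pow_atTop_nhds_zero_of_lt_one hpinv0 hpinv1).comp
        (Filter.tendsto_sub_atTop_nat 1)
  have hsum : Summable g := NonarchimedeanAddGroup.summable_of_tendsto_cofinite_zero htend
  refine ⟨hsum, IsUltrametricDist.norm_tsum_le_of_forall_le hgnorm, ?_⟩
  set d : ℕ → K := fun n => if n = 1 then a else 0 with hd
  have hdsum : Summable d := summable_of_ne_finset_zero (s := {1}) (by
    intro n hn
    simp only [Finset.mem_singleton] at hn
    simp [hd, hn])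
  have hdtsum : ∑' n, d n = a := by
    rw [hd]; exact tsum_eq_single 1 (by intro b hb; simp [hb]) |>.trans (by simp)
  rw [← hdtsum, ← Summable.tsum_sub hsum hdsum]
  apply IsUltrametricDist.norm_tsum_le_of_forall_le
  intro n
  match n, hd with
  | 0, _ => simp [hg, hd, PowerSeries.coeff_zero_eq_constantCoeff, hc0, hpinv0]
  | 1, _ => simp [hg, hd, hc1, hpinv0]
  | (m+2), _ =>
    have h2 : 2 ≤ m + 2 := by omega
    simp only [hd, if_neg (by omega : ¬ m + 2 = 1), sub_zero]
    refine (hbound _ h2).trans ?_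
    calc ((p:ℝ)⁻¹) ^ (m + 2 - 1) ≤ ((p:ℝ)⁻¹) ^ 1 :=
      pow_le_pow_of_le_one hpinv0 hpinv1.le (by omega)
      _ = (p:ℝ)⁻¹ := pow_one _

theorem psi_int_point (p f : ℕ) (hp : p.Prime) (hf : 0 < f) (q : ℕ) (hq : q = p ^ f)
    (Ψ : PowerSeries ℤ) (hΨ : IsPsi p q Ψ)
    (K : Type) [NormedField K] [CompleteSpace K] (hna : IsUltrametricDist K)
    (hpK : ‖(p : K)‖ = (p : ℝ)⁻¹)
    (hdisc : ∀ x : K, x ≠ 0 → ∃ m : ℤ, ‖x‖ = (p : ℝ) ^ m)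
    (hres : ∀ x : K, ‖x‖ ≤ 1 → ‖x ^ q - x‖ ≤ (p : ℝ)⁻¹)
    (a : K) (ha : ‖a‖ ≤ 1) :
    Summable (fun i : ℕ => ((PowerSeries.coeff i Ψ : ℤ) : K) * a ^ i) ∧
    ‖psiEval Ψ a‖ ≤ 1 ∧ ‖psiEval Ψ a - a‖ ≤ (p : ℝ)⁻¹ := by
  obtain ⟨h1, h2, h3⟩ := psi_int_point_aux p f hp hf q hq Ψ hΨ K hna hpK hdisc hres a ha
  exact ⟨h1, h2, h3⟩
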